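/- The discrete Dini surface f(k,ℓ) = (−2k sin δ₁ + sin α · tanh χ(k,ℓ), −sin α · sech χ(k,ℓ) · cos(2ℓδ₂), −sin α · sech χ(k,ℓ) · sin(2ℓδ₂)) with the Gauss map n(k,ℓ) = (sech χ · sin α, tanh χ · cos(2ℓδ₂) sin α − cos α sin(2ℓδ₂), tanh χ · sin(2ℓδ₂) sin α + cos α cos(2ℓδ₂)) satisfies the edge-constraint condition (f(k+1,ℓ) − f(k,ℓ)) · (n(k+1,ℓ) + n(k,ℓ)) = 0 in the first lattice direction, where χ(k,ℓ) = c₀ + k·a − ℓ·b with a = log((sin α + sin δ₁)/(sin α − sin δ₁)). -/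

import Mathlib

/-- Euclidean dot product on `ℝ³`. -/
def dot3 (u v : Fin 3 → ℝ) : ℝ := u 0 * v 0 + u 1 * v 1 + u 2 * v 2

/-- The discrete Dini surface. -/
noncomputable def fDini (α δ₁ δ₂ : ℝ) (χ : ℤ → ℤ → ℝ) (k ℓ : ℤ) : Fin 3 → ℝ :=
  ![-2 * k * Real.sin δ₁ + Real.sin α * Real.tanh (χ k ℓ),
    -Real.sin α * (1 / Real.cosh (χ k ℓ)) * Real.cos (2 * ℓ * δ₂),
    -Real.sin α * (1 / Real.cosh (χ k ℓ)) * Real.sin (2 * ℓ * δ₂)]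

/-- Its Gauss map. -/
noncomputable def nDini (α δ₂ : ℝ) (χ : ℤ → ℤ → ℝ) (k ℓ : ℤ) : Fin 3 → ℝ :=
  ![(1 / Real.cosh (χ k ℓ)) * Real.sin α,
    Real.tanh (χ k ℓ) * Real.cos (2 * ℓ * δ₂) * Real.sin α -
      Real.cos α * Real.sin (2 * ℓ * δ₂),
    Real.tanh (χ k ℓ) * Real.sin (2 * ℓ * δ₂) * Real.sin α +
      Real.cos α * Real.cos (2 * ℓ * δ₂)]

/-- Key identity in sinh/cosh form. -/
lemma key_sinh_cosh (α δ₁ : ℝ) (hδ₁pos : 0 < Real.sin δ₁) (hαδ : Real.sin δ₁ < Real.sin α)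
    (a : ℝ) (ha : a = Real.log ((Real.sin α + Real.sin δ₁) / (Real.sin α - Real.sin δ₁)))
    (x : ℝ) :
    Real.sin δ₁ * (Real.cosh x + Real.cosh (x + a)) =
      Real.sin α * (Real.sinh (x + a) - Real.sinh x) := by
  have h1 : (0:ℝ) < Real.sin α - Real.sin δ₁ := by linarith
  have h2 : (0:ℝ) < Real.sin α + Real.sin δ₁ := by linarith
  have hE : Real.exp a = (Real.sin α + Real.sin δ₁) / (Real.sin α - Real.sin δ₁) := by
    rw [ha]; exact Real.exp_log (div_pos h2 h1)
  have hxa : Real.exp (x + a) = Real.exp x * Real.exp a := Real.exp_add x a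
  have hnxa : Real.exp (-(x + a)) = Real.exp (-x) * (Real.exp a)⁻¹ := by
    rw [neg_add, Real.exp_add, Real.exp_neg a]
  have hnx : Real.exp (-x) * Real.exp x = 1 := by
    rw [← Real.exp_add]; simp
  rw [Real.cosh_eq, Real.cosh_eq, Real.sinh_eq, Real.sinh_eq, hxa, hnxa, hE]
  have hu : Real.exp x ≠ 0 := Real.exp_ne_zero x
  have hv : Real.exp (-x) ≠ 0 := Real.exp_ne_zero _
  field_simp
  nlinarith [hnx, sq_nonneg (Real.exp x)]

/-- Key identity in tanh/sech form. -/
lemma key_tanh (α δ₁ : ℝ) (hδ₁pos : 0 < Real.sin δ₁) (hαδ : Real.sin δ₁ < Real.sin α)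
    (a : ℝ) (ha : a = Real.log ((Real.sin α + Real.sin δ₁) / (Real.sin α - Real.sin δ₁)))
    (x : ℝ) :
    Real.sin δ₁ * (1 / Real.cosh x + 1 / Real.cosh (x + a)) =
      Real.sin α * (Real.tanh (x + a) * (1 / Real.cosh x) -
        Real.tanh x * (1 / Real.cosh (x + a))) := by
  have hcx : Real.cosh x ≠ 0 := (Real.cosh_pos _).ne'
  have hcy : Real.cosh (x + a) ≠ 0 := (Real.cosh_pos _).ne'
  have hk := key_sinh_cosh α δ₁ hδ₁pos hαδ a ha x
  rw [Real.tanh_eq_sinh_div_cosh, Real.tanh_eq_sinh_div_cosh]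
  field_simp
  linear_combination hk

/-- the discrete Dini surface satisfies the edge-constraint condition
in the first lattice direction. -/
theorem stmt_12 (α δ₁ δ₂ c₀ b : ℝ)
    (hα : α ∈ Set.Ioo (-Real.pi) Real.pi) (hα0 : α ≠ 0)
    (hδ₁pos : 0 < Real.sin δ₁) (hαδ : Real.sin δ₁ < Real.sin α)
    (a : ℝ) (ha : a = Real.log ((Real.sin α + Real.sin δ₁) / (Real.sin α - Real.sin δ₁)))
    (χ : ℤ → ℤ → ℝ) (hχ : ∀ k ℓ : ℤ, χ k ℓ = c₀ + k * a - ℓ * b) :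
    ∀ k ℓ : ℤ,
      dot3 (fDini α δ₁ δ₂ χ (k + 1) ℓ - fDini α δ₁ δ₂ χ k ℓ)
        (nDini α δ₂ χ (k + 1) ℓ + nDini α δ₂ χ k ℓ) = 0 := by
  intro k ℓ
  have hx : χ k ℓ = c₀ + k * a - ℓ * b := hχ k ℓ
  have hx' : χ (k + 1) ℓ = (c₀ + k * a - ℓ * b) + a := by
    rw [hχ (k + 1) ℓ]; push_cast; ring
  set x : ℝ := c₀ + k * a - ℓ * b with hxdef
  have hkey := key_tanh α δ₁ hδ₁pos hαδ a ha x
  have hP : Real.cos (2 * ℓ * δ₂) ^ 2 + Real.sin (2 * ℓ * δ₂) ^ 2 = 1 :=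
    Real.cos_sq_add_sin_sq _
  simp only [dot3, fDini, nDini, Pi.sub_apply, Pi.add_apply, Matrix.cons_val_zero,
    Matrix.cons_val_one, Matrix.head_cons, Matrix.cons_val_two, Matrix.tail_cons, hx, hx']
  push_cast
  linear_combination (-2 * Real.sin α) * hkey +
    (Real.sin α ^ 2 * (1 / Real.cosh x - 1 / Real.cosh (x + a)) *
      (Real.tanh x + Real.tanh (x + a))) * hP
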